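/- arXiv:2210.05308 — 2 statements merged into one kernel-verified Lean document; each statement's English description precedes it below -/
import Mathlib

section
/- Probabilistic safety via stochastic barrier functions: Consider a discrete-time stochastic dynamical system on a compact Borel set 𝒳 ⊆ ℝ^m given by a Borel-measurable dynamics function f : ℝ^m × ℝ^n × ℝ^p → ℝ^m, a Borel-measurable control policy π : ℝ^m → ℝ^n, and a probability distribution d on ℝ^p, with f(x, π(x), w) ∈ 𝒳 whenever x ∈ 𝒳 and w lies in the support of d. Let 𝒳₀, 𝒳_u ⊆ 𝒳 be Borel sets and p ∈ [0,1). On a probability space (Ω, ℱ, ℙ), let (ω_t)_{t∈ℕ} be an independent sequence of ℝ^p-valued random variables each with law d, fix x₀ ∈ 𝒳₀, and define (x_t)_{t∈ℕ} by x_{t+1} = f(x_t, π(x_t), ω_t). Suppose there exists a continuous function V : 𝒳 → ℝ with: V(x) ≥ 0 for all x ∈ 𝒳; V(x) ≤ 1 for all x ∈ 𝒳₀; V(x) ≥ 1/(1−p) for all x ∈ 𝒳_u; and ∫ V(f(x, π(x), w)) dd(w) ≤ V(x) for every x ∈ 𝒳 with V(x) ≤ 1/(1−p). Then ℙ[ x_t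 ∉ 𝒳_u for all t ∈ ℕ ] ≥ p. -/
open MeasureTheory ProbabilityTheory

/-- The (topological) support of a measure: the set of points all of whose open
neighbourhoods have positive measure. -/
def measureSupport {E : Type*} [TopologicalSpace E] [MeasurableSpace E]
    (d : Measure E) : Set E :=
  {w | ∀ U : Set E, IsOpen U → w ∈ U → 0 < d U}

lemma isOpen_compl_measureSupport {E : Type*} [TopologicalSpace E] [MeasurableSpace E]
    (d : Measure E) : IsOpen (measureSupport d)ᶜ := by
  rw [isOpen_iff_forall_mem_open]
  intro w hw
  simp only [measureSupport, Set.mem_compl_iff, Set.mem_setOf_eq, not_forall] at hw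
  obtain ⟨U, hU, hwU, hdU⟩ := hw
  refine ⟨U, fun z hz hcon => ?_, hU, hwU⟩
  exact hdU (hcon U hU hz)

lemma measure_compl_measureSupport {E : Type*} [TopologicalSpace E] [MeasurableSpace E]
    [SecondCountableTopology E]
    (d : Measure E) : d (measureSupport d)ᶜ = 0 := by
  set ι := {U : Set E // IsOpen U ∧ d U = 0}
  have hcover : (measureSupport d)ᶜ ⊆ ⋃ i : ι, (i : Set E) := by
    intro w hw
    simp only [measureSupport, Set.mem_compl_iff, Set.mem_setOf_eq, not_forall] at hw
    obtain ⟨U, hU, hwU, hdU⟩ := hw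
    have : d U = 0 := by
      by_contra h
      exact hdU (pos_iff_ne_zero.mpr h)
    exact Set.mem_iUnion.mpr ⟨⟨U, hU, this⟩, hwU⟩
  obtain ⟨T, hTc, hT⟩ := TopologicalSpace.isOpen_iUnion_countable (fun i : ι => (i : Set E))
    (fun i => i.2.1)
  refine measure_mono_null (hcover.trans hT.symm.subset) ?_
  exact (measure_biUnion_null_iff hTc).mpr fun i _ => i.2.2

/-- Probabilistic safety via stochastic barrier functions: a continuous function `V` that is
nonnegative on `𝒳`, at most `1` on the initial set, at least `1/(1-p)` on the unsafe set, and
non-increasing in one-step expectation below the level `1/(1-p)`, certifies that the trajectory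
process started at `x₀ ∈ X0` avoids the unsafe set forever with probability at least `p`. -/
theorem stochastic_barrier_function_certifies_safety
    {m n q : ℕ}
    (𝒳 : Set (Fin m → ℝ)) (hXcpt : IsCompact 𝒳) (hXmeas : MeasurableSet 𝒳)
    (f : (Fin m → ℝ) → (Fin n → ℝ) → (Fin q → ℝ) → (Fin m → ℝ))
    (hf : Measurable fun xuw : (Fin m → ℝ) × (Fin n → ℝ) × (Fin q → ℝ) =>
      f xuw.1 xuw.2.1 xuw.2.2)
    (π : (Fin m → ℝ) → (Fin n → ℝ)) (hπ : Measurable π)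
    (d : Measure (Fin q → ℝ)) [IsProbabilityMeasure d]
    (hinv : ∀ x ∈ 𝒳, ∀ w ∈ measureSupport d, f x (π x) w ∈ 𝒳)
    (X0 Xu : Set (Fin m → ℝ))
    (hX0sub : X0 ⊆ 𝒳) (hXusub : Xu ⊆ 𝒳)
    (hX0meas : MeasurableSet X0) (hXumeas : MeasurableSet Xu)
    (p : ℝ) (hp0 : 0 ≤ p) (hp1 : p < 1)
    {Ω : Type*} {m0 : MeasurableSpace Ω} (μ : Measure Ω) [IsProbabilityMeasure μ]
    (ω : ℕ → Ω → (Fin q → ℝ))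
    (hωmeas : ∀ t, Measurable (ω t))
    (hωindep : iIndepFun ω μ)
    (hωlaw : ∀ t, μ.map (ω t) = d)
    (x₀ : Fin m → ℝ) (hx₀ : x₀ ∈ X0)
    (traj : ℕ → Ω → (Fin m → ℝ))
    (htraj0 : ∀ ϖ, traj 0 ϖ = x₀)
    (htraj : ∀ t ϖ, traj (t + 1) ϖ = f (traj t ϖ) (π (traj t ϖ)) (ω t ϖ))
    (V : (Fin m → ℝ) → ℝ) (hVcont : ContinuousOn V 𝒳)
    (hVnonneg : ∀ x ∈ 𝒳, 0 ≤ V x)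
    (hVinit : ∀ x ∈ X0, V x ≤ 1)
    (hVunsafe : ∀ x ∈ Xu, 1 / (1 - p) ≤ V x)
    (hVdec : ∀ x ∈ 𝒳, V x ≤ 1 / (1 - p) →
      ∫ w, V (f x (π x) w) ∂d ≤ V x) :
    ENNReal.ofReal p ≤ μ {ϖ | ∀ t : ℕ, traj t ϖ ∉ Xu} := by
  classical
  have hp' : (0:ℝ) < 1 - p := by linarith
  set c : ℝ := 1 / (1 - p) with hc_def
  have hc0 : 0 < c := by positivity
  have hc1 : 1 ≤ c := by
    rw [hc_def, le_div_iff₀ hp']; linarith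
  have hx₀X : x₀ ∈ 𝒳 := hX0sub hx₀
  -- Tietze extension of V
  obtain ⟨g, hg⟩ := ContinuousMap.exists_restrict_eq (Y := ℝ) hXcpt.isClosed
    ⟨𝒳.restrict V, continuousOn_iff_continuous_restrict.mp hVcont⟩
  have hgV : ∀ x ∈ 𝒳, g x = V x := by
    intro x hx
    have := congrFun (congrArg ContinuousMap.toFun hg) ⟨x, hx⟩
    have h2 : g x = 𝒳.restrict V ⟨x, hx⟩ := by simpa using this
    exact h2
  -- bound on V over 𝒳
  obtain ⟨z, hz, hzmax⟩ := hXcpt.exists_isMaxOn ⟨x₀, hx₀X⟩ hVcont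
  set M : ℝ := V z with hM_def
  have hM0 : 0 ≤ M := hVnonneg z hz
  have hVM : ∀ x ∈ 𝒳, V x ≤ M := fun x hx => hzmax hx
  -- truncated barrier
  set W : (Fin m → ℝ) → ℝ := fun x => max 0 (min (g x) c) with hW_def
  have hWmeas : Measurable W :=
    measurable_const.max (g.continuous.measurable.min measurable_const)
  have hW0 : ∀ x, 0 ≤ W x := fun x => le_max_left _ _
  have hWc : ∀ x, W x ≤ c := fun x => max_le hc0.le (min_le_right _ _)
  have hWX : ∀ x ∈ 𝒳, W x = min (V x) c := by
    intro x hx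
    rw [hW_def]
    simp only [hgV x hx]
    exact max_eq_right (le_min (hVnonneg x hx) hc0.le)
  -- stopped dynamics
  set F : (Fin m → ℝ) → (Fin q → ℝ) → (Fin m → ℝ) :=
    fun x w => if c ≤ W x then x else f x (π x) w with hF_def
  have hFmeas : Measurable (fun z : (Fin m → ℝ) × (Fin q → ℝ) => F z.1 z.2) := by
    apply Measurable.ite
    · exact measurableSet_le measurable_const (hWmeas.comp measurable_fst)
    · exact measurable_fst
    · exact hf.comp (measurable_fst.prodMk ((hπ.comp measurable_fst).prodMk measurable_snd))
  -- support facts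
  set supp : Set (Fin q → ℝ) := measureSupport d with hsupp_def
  have hsuppmeas : MeasurableSet supp :=
    (isOpen_compl_measureSupport d).isClosed_compl.measurableSet.of_compl.of_compl
  have hsuppnull : d suppᶜ = 0 := measure_compl_measureSupport d
  have hωsupp : ∀ t, ∀ᵐ ϖ ∂μ, ω t ϖ ∈ supp := by
    intro t
    rw [ae_iff]
    have : {ϖ | ¬ ω t ϖ ∈ supp} = (ω t) ⁻¹' suppᶜ := rfl
    rw [this, ← Measure.map_apply (hωmeas t) hsuppmeas.compl, hωlaw t]
    exact hsuppnull
  -- stopped process as a function of the noise tuple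
  set Ψ : ∀ t : ℕ, (Fin t → (Fin q → ℝ)) → (Fin m → ℝ) :=
    fun t => Nat.rec (fun _ => x₀)
      (fun t Ψt v => F (Ψt (fun i => v i.castSucc)) (v (Fin.last t))) t with hΨ_def
  have hΨmeas : ∀ t, Measurable (Ψ t) := by
    intro t
    induction t with
    | zero => exact measurable_const
    | succ t ih =>
      exact hFmeas.comp ((ih.comp (measurable_pi_lambda _
        (fun i => measurable_pi_apply _))).prodMk (measurable_pi_apply _))
  set y : ℕ → Ω → (Fin m → ℝ) := fun t ϖ => Ψ t (fun i => ω i ϖ) with hy_def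
  have hy0 : ∀ ϖ, y 0 ϖ = x₀ := fun ϖ => rfl
  have hy : ∀ t ϖ, y (t + 1) ϖ = F (y t ϖ) (ω t ϖ) := fun t ϖ => rfl
  have hymeas : ∀ t, Measurable (y t) :=
    fun t => (hΨmeas t).comp (measurable_pi_lambda _ (fun i => hωmeas i))
  -- a.s. the stopped process stays in 𝒳
  have hyX : ∀ t, ∀ᵐ ϖ ∂μ, y t ϖ ∈ 𝒳 := by
    intro t
    induction t with
    | zero => exact Filter.Eventually.of_forall (fun ϖ => by rw [hy0]; exact hx₀X)
    | succ t ih =>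
      filter_upwards [ih, hωsupp t] with ϖ h1 h2
      rw [hy t ϖ, hF_def]
      by_cases hcy : c ≤ W (y t ϖ)
      · simpa [hcy] using h1
      · simpa [hcy] using hinv _ h1 _ h2
  -- independence of the stopped state from current noise
  have hIndep : ∀ t, IndepFun (y t) (ω t) μ := by
    intro t
    have hd : Disjoint (Finset.range t) ({t} : Finset ℕ) := by
      simp [Finset.disjoint_left]
      omega
    have h := hωindep.indepFun_finset (Finset.range t) {t} hd hωmeas
    set φ : ({i : ℕ // i ∈ Finset.range t} → (Fin q → ℝ)) → (Fin m → ℝ) :=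
      fun v => Ψ t (fun i : Fin t => v ⟨(i : ℕ), Finset.mem_range.mpr i.isLt⟩) with hφ_def
    have hφmeas : Measurable φ :=
      (hΨmeas t).comp (measurable_pi_lambda _ (fun i => measurable_pi_apply _))
    set e : ({i : ℕ // i ∈ ({t} : Finset ℕ)} → (Fin q → ℝ)) → (Fin q → ℝ) :=
      fun v => v ⟨t, Finset.mem_singleton_self t⟩ with he_def
    have hemeas : Measurable e := measurable_pi_apply _
    have := h.comp hφmeas hemeas
    exact this
  -- joint law is a product
  have hmap : ∀ t, μ.map (fun ϖ => (y t ϖ, ω t ϖ)) = (μ.map (y t)).prod d := by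
    intro t
    rw [← hωlaw t]
    exact (indepFun_iff_map_prod_eq_prod_map_map (hymeas t).aemeasurable
      (hωmeas t).aemeasurable).mp (hIndep t)
  -- pointwise one-step drift of W under the stopped dynamics
  have hstep : ∀ x ∈ 𝒳, ∫ w, W (F x w) ∂d ≤ W x := by
    intro x hx
    by_cases hcx : c ≤ W x
    · have : (fun w => W (F x w)) = fun _ => W x := by
        funext w; rw [hF_def]; simp [hcx]
      rw [this, integral_const]
      simp
    · push_neg at hcx
      have hWxV : W x = min (V x) c := hWX x hx
      have hVxc : V x ≤ c := by
        by_contra h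
        push_neg at h
        rw [hWxV, min_eq_right h.le] at hcx
        exact lt_irrefl _ hcx
      have hWxV' : W x = V x := by rw [hWxV, min_eq_left hVxc]
      have hFx : ∀ w, F x w = f x (π x) w := by
        intro w; rw [hF_def]; simp [not_le.mpr hcx]
      set φ : (Fin q → ℝ) → (Fin m → ℝ) := fun w => f x (π x) w with hφ_def
      have hφmeas : Measurable φ :=
        hf.comp (measurable_const.prodMk (measurable_const.prodMk measurable_id))
      have haeX : ∀ᵐ w ∂d, φ w ∈ 𝒳 := by
        have : ∀ᵐ w ∂d, w ∈ supp := by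
          rw [ae_iff]
          exact hsuppnull
        filter_upwards [this] with w hw
        exact hinv x hx w hw
      have hgint : Integrable (fun w => g (φ w)) d := by
        refine (integrable_const M).mono'
          ((g.continuous.measurable.comp hφmeas).aestronglyMeasurable) ?_
        filter_upwards [haeX] with w hw
        rw [hgV _ hw, Real.norm_eq_abs, abs_of_nonneg (hVnonneg _ hw)]
        exact hVM _ hw
      have hVgae : (fun w => V (φ w)) =ᵐ[d] fun w => g (φ w) := by
        filter_upwards [haeX] with w hw
        rw [hgV _ hw]
      have hVint : Integrable (fun w => V (φ w)) d := hgint.congr hVgae.symm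
      have hWint : Integrable (fun w => W (F x w)) d := by
        refine (integrable_const c).mono'
          ((hWmeas.comp (hFmeas.comp (measurable_const.prodMk measurable_id))).aestronglyMeasurable) ?_
        exact Filter.Eventually.of_forall fun w => by
          rw [Real.norm_eq_abs, abs_of_nonneg (hW0 _)]; exact hWc _
      have hmono : ∫ w, W (F x w) ∂d ≤ ∫ w, V (φ w) ∂d := by
        refine integral_mono_ae hWint hVint ?_
        filter_upwards [haeX] with w hw
        rw [hFx w, hWX _ hw]
        exact min_le_left _ _
      calc ∫ w, W (F x w) ∂d ≤ ∫ w, V (φ w) ∂d := hmono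
        _ ≤ V x := hVdec x hx hVxc
        _ = W x := hWxV'.symm
  -- integrability of W along the stopped process
  have hWyint : ∀ t, Integrable (fun ϖ => W (y t ϖ)) μ := by
    intro t
    refine (integrable_const c).mono' ((hWmeas.comp (hymeas t)).aestronglyMeasurable) ?_
    exact Filter.Eventually.of_forall fun ϖ => by
      rw [Real.norm_eq_abs, abs_of_nonneg (hW0 _)]; exact hWc _
  -- expectation decrease
  have hdecE : ∀ t, ∫ ϖ, W (y (t + 1) ϖ) ∂μ ≤ ∫ ϖ, W (y t ϖ) ∂μ := by
    intro t
    set ν : Measure (Fin m → ℝ) := μ.map (y t) with hν_def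
    have hνprob : IsProbabilityMeasure ν := Measure.isProbabilityMeasure_map (hymeas t).aemeasurable
    set H : (Fin m → ℝ) × (Fin q → ℝ) → ℝ := fun z => W (F z.1 z.2) with hH_def
    have hHmeas : Measurable H := hWmeas.comp hFmeas
    have hHint : Integrable H (ν.prod d) := by
      refine (integrable_const c).mono' hHmeas.aestronglyMeasurable ?_
      exact Filter.Eventually.of_forall fun z => by
        rw [Real.norm_eq_abs, abs_of_nonneg (hW0 _)]; exact hWc _
    have hWνint : Integrable W ν := by
      refine (integrable_const c).mono' hWmeas.aestronglyMeasurable ?_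
      exact Filter.Eventually.of_forall fun x => by
        rw [Real.norm_eq_abs, abs_of_nonneg (hW0 _)]; exact hWc _
    have haeν : ∀ᵐ x ∂ν, x ∈ 𝒳 :=
      (ae_map_iff (hymeas t).aemeasurable hXmeas).mpr (hyX t)
    calc ∫ ϖ, W (y (t + 1) ϖ) ∂μ
        = ∫ ϖ, H (y t ϖ, ω t ϖ) ∂μ := rfl
      _ = ∫ z, H z ∂(μ.map (fun ϖ => (y t ϖ, ω t ϖ))) := by
          rw [integral_map ((hymeas t).prodMk (hωmeas t)).aemeasurable
            hHmeas.aestronglyMeasurable]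
      _ = ∫ z, H z ∂(ν.prod d) := by rw [hmap t]
      _ = ∫ x, ∫ w, H (x, w) ∂d ∂ν := integral_prod H hHint
      _ ≤ ∫ x, W x ∂ν := by
          refine integral_mono_ae hHint.integral_prod_left hWνint ?_
          filter_upwards [haeν] with x hx
          exact hstep x hx
      _ = ∫ ϖ, W (y t ϖ) ∂μ := integral_map (hymeas t).aemeasurable
            hWmeas.aestronglyMeasurable
  -- expectation bound
  have hEt : ∀ t, ∫ ϖ, W (y t ϖ) ∂μ ≤ 1 := by
    intro t
    induction t with
    | zero =>
      have : (fun ϖ => W (y 0 ϖ)) = fun _ => W x₀ := by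
        funext ϖ; rw [hy0]
      rw [this, integral_const]
      simp only [Measure.real, measure_univ, ENNReal.toReal_one, smul_eq_mul, one_mul]
      rw [hWX x₀ hx₀X]
      exact le_trans (min_le_left _ _) (hVinit x₀ hx₀)
    | succ t ih => exact le_trans (hdecE t) ih
  -- Markov inequality
  have hMark : ∀ t, μ {ϖ | c ≤ W (y t ϖ)} ≤ ENNReal.ofReal (1 - p) := by
    intro t
    have hm := mul_meas_ge_le_integral_of_nonneg
      (Filter.Eventually.of_forall fun ϖ => hW0 (y t ϖ)) (hWyint t) c
    have h1 : c * (μ {ϖ | c ≤ W (y t ϖ)}).toReal ≤ 1 := le_trans hm (hEt t)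
    have h2 : (μ {ϖ | c ≤ W (y t ϖ)}).toReal ≤ 1 - p := by
      rw [hc_def] at h1
      rw [div_mul_eq_mul_div, div_le_one hp'] at h1
      linarith [h1]
    calc μ {ϖ | c ≤ W (y t ϖ)} = ENNReal.ofReal (μ {ϖ | c ≤ W (y t ϖ)}).toReal :=
          (ENNReal.ofReal_toReal (measure_ne_top μ _)).symm
      _ ≤ ENNReal.ofReal (1 - p) := ENNReal.ofReal_le_ofReal h2
  -- trajectory measurability
  have htrajmeas : ∀ t, Measurable (traj t) := by
    intro t
    induction t with
    | zero =>
      have : traj 0 = fun _ => x₀ := funext htraj0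
      rw [this]; exact measurable_const
    | succ t ih =>
      have : traj (t + 1) = fun ϖ => f (traj t ϖ) (π (traj t ϖ)) (ω t ϖ) :=
        funext (htraj t)
      rw [this]
      exact hf.comp (ih.prodMk ((hπ.comp ih).prodMk (hωmeas t)))
  -- the good event
  set G : Set Ω := {ϖ | ∀ t, ω t ϖ ∈ supp} with hG_def
  have hGc : μ Gᶜ = 0 := by
    have : Gᶜ ⊆ ⋃ t, {ϖ | ¬ ω t ϖ ∈ supp} := by
      intro ϖ hϖ
      simp only [hG_def, Set.mem_compl_iff, Set.mem_setOf_eq, not_forall] at hϖ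
      obtain ⟨t, ht⟩ := hϖ
      exact Set.mem_iUnion.mpr ⟨t, ht⟩
    refine measure_mono_null this (measure_iUnion_null fun t => ?_)
    have := hωsupp t
    rw [ae_iff] at this
    exact this
  -- on the good event, hitting the unsafe set forces the stopped barrier to reach c
  have hkey : ∀ ϖ ∈ G, ∀ t, (∀ s, s ≤ t → traj s ϖ ∉ Xu) ∨ c ≤ W (y t ϖ) := by
    intro ϖ hϖ t
    -- first: invariant of the stopped process
    have hP : ∀ t, (y t ϖ = traj t ϖ ∧ y t ϖ ∈ 𝒳 ∧ W (y t ϖ) < c) ∨ c ≤ W (y t ϖ) := by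
      intro t
      induction t with
      | zero =>
        by_cases h : c ≤ W (y 0 ϖ)
        · exact Or.inr h
        · exact Or.inl ⟨by rw [hy0, htraj0], by rw [hy0]; exact hx₀X, not_le.mp h⟩
      | succ t ih =>
        rcases ih with ⟨heq, hX, hlt⟩ | hge
        · have hstepeq : y (t + 1) ϖ = f (y t ϖ) (π (y t ϖ)) (ω t ϖ) := by
            rw [hy t ϖ, hF_def]; simp [not_le.mpr hlt]
          have heq' : y (t + 1) ϖ = traj (t + 1) ϖ := by
            rw [hstepeq, heq, htraj t ϖ]
          have hX' : y (t + 1) ϖ ∈ 𝒳 := by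
            rw [hstepeq]; exact hinv _ hX _ (hϖ t)
          by_cases h : c ≤ W (y (t + 1) ϖ)
          · exact Or.inr h
          · exact Or.inl ⟨heq', hX', not_le.mp h⟩
        · have : y (t + 1) ϖ = y t ϖ := by
            rw [hy t ϖ, hF_def]; simp [hge]
          rw [this]
          exact Or.inr hge
    -- freezing: once ≥ c, always ≥ c
    have hfreeze : ∀ a b, a ≤ b → c ≤ W (y a ϖ) → c ≤ W (y b ϖ) := by
      intro a b hab h
      induction hab with
      | refl => exact h
      | @step b hb ih =>
        have : y (b + 1) ϖ = y b ϖ := by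
          rw [hy b ϖ, hF_def]; simp [ih]
        rw [this]; exact ih
    by_cases h : ∀ s, s ≤ t → traj s ϖ ∉ Xu
    · exact Or.inl h
    · push_neg at h
      obtain ⟨s, hst, hs⟩ := h
      refine Or.inr (hfreeze s t hst ?_)
      rcases hP s with ⟨heq, hX, hlt⟩ | hge
      · exfalso
        have : c ≤ W (y s ϖ) := by
          rw [heq, hWX _ (hXusub hs), min_eq_right (hVunsafe _ hs)]
        exact absurd this (not_le.mpr hlt)
      · exact hge
  -- per-time-horizon unsafe events
  set A : ℕ → Set Ω := fun t => {ϖ | ∃ s ≤ t, traj s ϖ ∈ Xu} with hA_def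
  have hAbound : ∀ t, μ (A t) ≤ ENNReal.ofReal (1 - p) := by
    intro t
    have hsub : A t ⊆ {ϖ | c ≤ W (y t ϖ)} ∪ Gᶜ := by
      intro ϖ hϖ
      by_cases hG' : ϖ ∈ G
      · left
        obtain ⟨s, hst, hs⟩ := hϖ
        rcases hkey ϖ hG' t with hall | hcge
        · exact absurd hs (hall s hst)
        · exact hcge
      · right; exact hG'
    calc μ (A t) ≤ μ ({ϖ | c ≤ W (y t ϖ)} ∪ Gᶜ) := measure_mono hsub
      _ ≤ μ {ϖ | c ≤ W (y t ϖ)} + μ Gᶜ := measure_union_le _ _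
      _ = μ {ϖ | c ≤ W (y t ϖ)} := by rw [hGc, add_zero]
      _ ≤ ENNReal.ofReal (1 - p) := hMark t
  -- the union unsafe event
  set U : Set Ω := ⋃ t, (traj t) ⁻¹' Xu with hU_def
  have hUmeas : MeasurableSet U := MeasurableSet.iUnion fun t => (htrajmeas t) hXumeas
  have hUbound : μ U ≤ ENNReal.ofReal (1 - p) := by
    have hUA : U = ⋃ t, A t := by
      ext ϖ
      simp only [hU_def, hA_def, Set.mem_iUnion, Set.mem_preimage, Set.mem_setOf_eq]
      constructor
      · rintro ⟨t, ht⟩; exact ⟨t, t, le_refl t, ht⟩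
      · rintro ⟨t, s, _, hs⟩; exact ⟨s, hs⟩
    have hmono : Monotone A := by
      intro a b hab ϖ hϖ
      obtain ⟨s, hsa, hs⟩ := hϖ
      exact ⟨s, hsa.trans hab, hs⟩
    rw [hUA, Directed.measure_iUnion hmono.directed_le]
    exact iSup_le hAbound
  -- conclusion
  have hsafe_eq : {ϖ | ∀ t : ℕ, traj t ϖ ∉ Xu} = Uᶜ := by
    ext ϖ; simp [hU_def]
  rw [hsafe_eq, prob_compl_eq_one_sub hUmeas]
  have h1 : ENNReal.ofReal p + ENNReal.ofReal (1 - p) = 1 := by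
    rw [← ENNReal.ofReal_add hp0 (by linarith)]
    norm_num
  have h2 : (1 : ENNReal) - ENNReal.ofReal (1 - p) = ENNReal.ofReal p := by
    rw [← h1, ENNReal.add_sub_cancel_right ENNReal.ofReal_ne_top]
  calc ENNReal.ofReal p = 1 - ENNReal.ofReal (1 - p) := h2.symm
    _ ≤ 1 - μ U := tsub_le_tsub_left hUbound 1
end

section
/- Almost-sure reachability via ranking supermartingales: Consider a discrete-time stochastic dynamical system on a compact Borel set 𝒳 ⊆ ℝ^m given by a Borel-measurable dynamics function f : ℝ^m × ℝ^n × ℝ^p → ℝ^m, a Borel-measurable control policy π : ℝ^m → ℝ^n, and a probability distribution d on ℝ^p, with f(x, π(x), w) ∈ 𝒳 whenever x ∈ 𝒳 and w lies in the support of d. Let 𝒳_t ⊆ 𝒳 be a Borel target set. On a probability space (Ω, ℱ, ℙ), let (ω_t)_{t∈ℕ} be an independent sequence of ℝ^p-valued random variables each with law d, fix x₀ ∈ 𝒳, and define (x_t)_{t∈ℕ} by x_{t+1} = f(x_t, π(x_t), ω_t). Suppose there exist a continuous function V : 𝒳 → ℝ and ε > 0 such that V(x) ≥ 0 for all x ∈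 𝒳 and ∫ V(f(x, π(x), w)) dd(w) ≤ V(x) − ε for every x ∈ 𝒳 \ 𝒳_t. Then ℙ[ ∃ t ∈ ℕ : x_t ∈ 𝒳_t ] = 1. -/
open MeasureTheory ProbabilityTheory

lemma measureSupport_compl_eq {E : Type*} [TopologicalSpace E] [MeasurableSpace E]
    (d : Measure E) :
    (measureSupport d)ᶜ = ⋃₀ {U : Set E | IsOpen U ∧ d U = 0} := by
  ext w
  simp only [Set.mem_compl_iff, measureSupport, Set.mem_setOf_eq, Set.mem_sUnion]
  constructor
  · intro h
    push_neg at h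
    obtain ⟨U, hU, hw, hd⟩ := h
    exact ⟨U, ⟨hU, le_antisymm hd zero_le⟩, hw⟩
  · rintro ⟨U, ⟨hU, hd⟩, hw⟩ h
    exact absurd (h U hU hw) (by simp [hd])

lemma measureSupport_compl_null {E : Type*} [TopologicalSpace E]
    [SecondCountableTopology E] [MeasurableSpace E]
    (d : Measure E) : d (measureSupport d)ᶜ = 0 := by
  obtain ⟨T, hTc, hTsub, hTeq⟩ := TopologicalSpace.isOpen_sUnion_countable
    {U : Set E | IsOpen U ∧ d U = 0} (fun U hU => hU.1)
  rw [measureSupport_compl_eq, ← hTeq, measure_sUnion_null_iff hTc]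
  exact fun s hs => (hTsub hs).2

/-- The deterministic trajectory map: state after `t` steps as a function of the
first `t` noise values. -/
def trajFun {α β γ : Type*} (f : α → β → γ → α) (π : α → β) (x₀ : α) :
    (t : ℕ) → (Fin t → γ) → α
  | 0, _ => x₀
  | (t+1), z => f (trajFun f π x₀ t (Fin.init z)) (π (trajFun f π x₀ t (Fin.init z)))
      (z (Fin.last t))

lemma trajFun_zero {α β γ : Type*} (f : α → β → γ → α) (π : α → β) (x₀ : α)
    (z : Fin 0 → γ) : trajFun f π x₀ 0 z = x₀ := rfl

lemma trajFun_succ {α β γ : Type*} (f : α → β → γ → α) (π : α → β) (x₀ : α)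
    (t : ℕ) (z : Fin (t+1) → γ) :
    trajFun f π x₀ (t+1) z = f (trajFun f π x₀ t (Fin.init z))
      (π (trajFun f π x₀ t (Fin.init z))) (z (Fin.last t)) := rfl

lemma measurable_trajFun {α β γ : Type*} [MeasurableSpace α] [MeasurableSpace β]
    [MeasurableSpace γ] {f : α → β → γ → α} {π : α → β}
    (hf : Measurable fun p : α × β × γ => f p.1 p.2.1 p.2.2) (hπ : Measurable π) (x₀ : α) :
    ∀ t, Measurable (trajFun f π x₀ t) := by
  intro t
  induction t with
  | zero => exact measurable_const
  | succ t ih =>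
    have hinit : Measurable (Fin.init : (Fin (t+1) → γ) → Fin t → γ) :=
      measurable_pi_lambda _ fun i => measurable_pi_apply _
    have h1 : Measurable fun z : Fin (t+1) → γ => trajFun f π x₀ t (Fin.init z) :=
      ih.comp hinit
    have : Measurable fun z : Fin (t+1) → γ =>
        f (trajFun f π x₀ t (Fin.init z)) (π (trajFun f π x₀ t (Fin.init z)))
          (z (Fin.last t)) :=
      hf.comp (h1.prodMk ((hπ.comp h1).prodMk (measurable_pi_apply _)))
    exact this

/-- If `X` and `Y` are independent, the integral of `g (X ϖ, Y ϖ)` can be computed as an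
iterated integral against the two laws. -/
lemma indepFun_integral_comp {Ω α β : Type*} [MeasurableSpace Ω] [MeasurableSpace α]
    [MeasurableSpace β] {μ : Measure Ω} [IsProbabilityMeasure μ]
    {X : Ω → α} {Y : Ω → β} (hX : Measurable X) (hY : Measurable Y)
    (h : IndepFun X Y μ) (g : α × β → ℝ)
    (hg : AEStronglyMeasurable g ((μ.map X).prod (μ.map Y)))
    (hgi : Integrable g ((μ.map X).prod (μ.map Y))) :
    ∫ ϖ, g (X ϖ, Y ϖ) ∂μ = ∫ x, ∫ y, g (x, y) ∂(μ.map Y) ∂(μ.map X) := by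
  haveI : IsProbabilityMeasure (μ.map X) := Measure.isProbabilityMeasure_map hX.aemeasurable
  haveI : IsProbabilityMeasure (μ.map Y) := Measure.isProbabilityMeasure_map hY.aemeasurable
  have hmap := (indepFun_iff_map_prod_eq_prod_map_map hX.aemeasurable hY.aemeasurable).mp h
  rw [← MeasureTheory.integral_prod _ hgi, ← hmap,
    integral_map (hX.aemeasurable.prodMk hY.aemeasurable) (hmap ▸ hg)]

/-- Almost-sure reachability via ranking supermartingales: a nonnegative continuous function
`V` whose one-step expected value decreases by at least `ε > 0` at every state outside the
target set `Xt` certifies that the trajectory process started at `x₀ ∈ 𝒳` reaches `Xt`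
with probability `1`. -/
theorem ranking_supermartingale_certifies_as_reachability
    {m n q : ℕ}
    (𝒳 : Set (Fin m → ℝ)) (hXcpt : IsCompact 𝒳) (hXmeas : MeasurableSet 𝒳)
    (f : (Fin m → ℝ) → (Fin n → ℝ) → (Fin q → ℝ) → (Fin m → ℝ))
    (hf : Measurable fun xuw : (Fin m → ℝ) × (Fin n → ℝ) × (Fin q → ℝ) =>
      f xuw.1 xuw.2.1 xuw.2.2)
    (π : (Fin m → ℝ) → (Fin n → ℝ)) (hπ : Measurable π)
    (d : Measure (Fin q → ℝ)) [IsProbabilityMeasure d]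
    (hinv : ∀ x ∈ 𝒳, ∀ w ∈ measureSupport d, f x (π x) w ∈ 𝒳)
    (Xt : Set (Fin m → ℝ)) (hXtsub : Xt ⊆ 𝒳) (hXtmeas : MeasurableSet Xt)
    {Ω : Type*} {m0 : MeasurableSpace Ω} (μ : Measure Ω) [IsProbabilityMeasure μ]
    (ω : ℕ → Ω → (Fin q → ℝ))
    (hωmeas : ∀ t, Measurable (ω t))
    (hωindep : iIndepFun ω μ)
    (hωlaw : ∀ t, μ.map (ω t) = d)
    (x₀ : Fin m → ℝ) (hx₀ : x₀ ∈ 𝒳)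
    (traj : ℕ → Ω → (Fin m → ℝ))
    (htraj0 : ∀ ϖ, traj 0 ϖ = x₀)
    (htraj : ∀ t ϖ, traj (t + 1) ϖ = f (traj t ϖ) (π (traj t ϖ)) (ω t ϖ))
    (V : (Fin m → ℝ) → ℝ) (hVcont : ContinuousOn V 𝒳)
    (hVnonneg : ∀ x ∈ 𝒳, 0 ≤ V x)
    (ε : ℝ) (hε : 0 < ε)
    (hVdec : ∀ x ∈ 𝒳 \ Xt, ∫ w, V (f x (π x) w) ∂d ≤ V x - ε) :
    μ {ϖ | ∃ t : ℕ, traj t ϖ ∈ Xt} = 1 := by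
  classical
  -- Extend `V` to a continuous function `W` on all of `ℝ^m` (Tietze).
  obtain ⟨Vc, hVc⟩ := ContinuousMap.exists_restrict_eq (Y := ℝ) hXcpt.isClosed
    ⟨_, continuousOn_iff_continuous_restrict.mp hVcont⟩
  set W : (Fin m → ℝ) → ℝ := ⇑Vc with hWdef
  have hWcont : Continuous W := Vc.continuous
  have hWeq : ∀ x ∈ 𝒳, W x = V x := by
    intro x hx
    have := congrFun (congrArg (fun g : C(𝒳, ℝ) => ⇑g) hVc) ⟨x, hx⟩
    simpa using this
  -- A uniform bound for `W` on `𝒳`.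
  obtain ⟨z, hz𝒳, hzmax⟩ := hXcpt.exists_isMaxOn ⟨x₀, hx₀⟩ hWcont.continuousOn
  set C : ℝ := max (W z) 0 with hCdef
  have hC0 : 0 ≤ C := le_max_right _ _
  have hWle : ∀ x ∈ 𝒳, W x ≤ C := fun x hx => le_max_of_le_left (hzmax hx)
  have hWnn : ∀ x ∈ 𝒳, 0 ≤ W x := by
    intro x hx; rw [hWeq x hx]; exact hVnonneg x hx
  -- The deterministic trajectory map and the noise vectors.
  set Φ := trajFun f π x₀ with hΦdef
  have hΦmeas : ∀ t, Measurable (Φ t) := measurable_trajFun hf hπ x₀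
  set X : ∀ t : ℕ, Ω → (Fin t → (Fin q → ℝ)) := fun t ϖ i => ω i ϖ with hXdef
  have hXmeasω : ∀ t, Measurable (X t) := fun t =>
    measurable_pi_lambda _ fun i => hωmeas i
  have htrajΦ : ∀ t ϖ, traj t ϖ = Φ t (X t ϖ) := by
    intro t
    induction t with
    | zero => intro ϖ; rw [htraj0]; rfl
    | succ t ih =>
      intro ϖ
      rw [htraj t ϖ, ih ϖ]
      have h1 : Fin.init (X (t+1) ϖ) = X t ϖ := by
        funext i; simp [Fin.init, hXdef]
      rw [hΦdef, trajFun_succ, h1]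
      rfl
  have htrajmeas : ∀ t, Measurable (traj t) := by
    intro t
    have : traj t = fun ϖ => Φ t (X t ϖ) := funext (htrajΦ t)
    rw [this]; exact (hΦmeas t).comp (hXmeasω t)
  -- The "not yet reached" events, as preimages under the noise vectors.
  set D : ∀ t : ℕ, Set (Fin t → (Fin q → ℝ)) := fun t =>
    ⋂ (s : ℕ) (h : s ≤ t),
      (fun z : Fin t → (Fin q → ℝ) => Φ s (fun i : Fin s => z (Fin.castLE h i))) ⁻¹' Xtᶜ
    with hDdef
  have hDmeas : ∀ t, MeasurableSet (D t) := by
    intro t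
    refine MeasurableSet.iInter fun s => MeasurableSet.iInter fun h => ?_
    exact ((hΦmeas s).comp (measurable_pi_lambda _ fun i => measurable_pi_apply _))
      hXtmeas.compl
  set B : ℕ → Set Ω := fun t => X t ⁻¹' D t with hBdef
  have hBmeas : ∀ t, MeasurableSet (B t) := fun t => (hXmeasω t) (hDmeas t)
  have hXrestr : ∀ (t s : ℕ) (hs : s ≤ t) (ϖ : Ω),
      (fun i : Fin s => X t ϖ (Fin.castLE hs i)) = X s ϖ := by
    intro t s hs ϖ; funext i; rfl
  have hBmem : ∀ t ϖ, ϖ ∈ B t ↔ ∀ s, s ≤ t → traj s ϖ ∉ Xt := by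
    intro t ϖ
    simp only [hBdef, hDdef, Set.mem_preimage, Set.mem_iInter, Set.mem_compl_iff]
    constructor
    · intro h s hs
      have := h s hs
      rw [hXrestr t s hs ϖ] at this
      rw [htrajΦ s ϖ]; exact this
    · intro h s hs
      rw [hXrestr t s hs ϖ, ← htrajΦ s ϖ]; exact h s hs
  -- Almost-everywhere facts.
  have hsuppmeas : MeasurableSet ((measureSupport d)ᶜ) :=
    (isOpen_compl_measureSupport d).measurableSet
  have hdsupp : ∀ᵐ w ∂d, w ∈ measureSupport d := by
    rw [ae_iff]
    have : {w | ¬ w ∈ measureSupport d} = (measureSupport d)ᶜ := rfl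
    rw [this]; exact measureSupport_compl_null d
  have hωsupp : ∀ t, ∀ᵐ ϖ ∂μ, ω t ϖ ∈ measureSupport d := by
    intro t
    rw [ae_iff]
    have h1 : {ϖ | ¬ ω t ϖ ∈ measureSupport d} = ω t ⁻¹' (measureSupport d)ᶜ := rfl
    rw [h1, ← Measure.map_apply (hωmeas t) hsuppmeas, hωlaw t]
    exact measureSupport_compl_null d
  have htraj𝒳 : ∀ t, ∀ᵐ ϖ ∂μ, traj t ϖ ∈ 𝒳 := by
    intro t
    induction t with
    | zero => filter_upwards with ϖ; rw [htraj0]; exact hx₀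
    | succ t ih =>
      filter_upwards [ih, hωsupp t] with ϖ h1 h2
      rw [htraj]
      exact hinv _ h1 _ h2
  -- Integrability of the indicator processes.
  have hint : ∀ (t : ℕ) (s : Set Ω), MeasurableSet s →
      Integrable (s.indicator fun ϖ => W (traj t ϖ)) μ := by
    intro t s hs
    refine Integrable.mono' (integrable_const C)
      (((hWcont.measurable.comp (htrajmeas t)).indicator hs).aestronglyMeasurable) ?_
    filter_upwards [htraj𝒳 t] with ϖ h
    by_cases hϖ : ϖ ∈ s
    · rw [Set.indicator_of_mem hϖ, Real.norm_eq_abs, abs_of_nonneg (hWnn _ h)]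
      exact hWle _ h
    · simp [Set.indicator_of_notMem hϖ, hC0]
  set G : ℕ → ℝ := fun t => ∫ ϖ, (B t).indicator (fun ϖ => W (traj t ϖ)) ϖ ∂μ with hGdef
  have hGnn : ∀ t, 0 ≤ G t := by
    intro t
    refine integral_nonneg_of_ae ?_
    filter_upwards [htraj𝒳 t] with ϖ h
    by_cases hϖ : ϖ ∈ B t
    · rw [Set.indicator_of_mem hϖ]; exact hWnn _ h
    · simp [Set.indicator_of_notMem hϖ]
  have hG0 : G 0 ≤ C := by
    have := integral_mono_ae (hint 0 (B 0) (hBmeas 0)) (integrable_const C) ?_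
    · simpa using this
    · filter_upwards [htraj𝒳 0] with ϖ h
      by_cases hϖ : ϖ ∈ B 0
      · rw [Set.indicator_of_mem hϖ]; exact hWle _ h
      · rw [Set.indicator_of_notMem hϖ]; exact hC0
  -- The key one-step inequality.
  have hstep : ∀ t, G (t+1) ≤ G t - ε * (μ (B t)).toReal := by
    intro t
    set ν := μ.map (X t) with hνdef
    haveI : IsProbabilityMeasure ν := Measure.isProbabilityMeasure_map (hXmeasω t).aemeasurable
    -- Step A : shrink the event.
    have hBsub : B (t+1) ⊆ B t := by
      intro ϖ h
      rw [hBmem] at h ⊢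
      exact fun s hs => h s (hs.trans (Nat.le_succ t))
    have stepA : G (t+1) ≤ ∫ ϖ, (B t).indicator (fun ϖ => W (traj (t+1) ϖ)) ϖ ∂μ := by
      refine integral_mono_ae (hint (t+1) (B (t+1)) (hBmeas (t+1)))
        (hint (t+1) (B t) (hBmeas t)) ?_
      filter_upwards [htraj𝒳 (t+1)] with ϖ h
      by_cases h1 : ϖ ∈ B (t+1)
      · rw [Set.indicator_of_mem h1, Set.indicator_of_mem (hBsub h1)]
      · rw [Set.indicator_of_notMem h1]
        by_cases h2 : ϖ ∈ B t
        · rw [Set.indicator_of_mem h2]; exact hWnn _ h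
        · rw [Set.indicator_of_notMem h2]
    -- Step B : independence / Fubini.
    set g2 : (Fin t → (Fin q → ℝ)) × (Fin q → ℝ) → ℝ := fun p =>
      ((D t) ×ˢ (Set.univ : Set (Fin q → ℝ))).indicator
        (fun p => W (f (Φ t p.1) (π (Φ t p.1)) p.2)) p with hg2def
    have hg2meas : Measurable g2 := by
      refine Measurable.indicator ?_ ((hDmeas t).prod MeasurableSet.univ)
      exact hWcont.measurable.comp (hf.comp
        (((hΦmeas t).comp measurable_fst).prodMk
          (((hπ.comp ((hΦmeas t).comp measurable_fst))).prodMk measurable_snd)))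
    have hΦν : ∀ᵐ zz ∂ν, Φ t zz ∈ 𝒳 := by
      rw [ae_iff, hνdef]
      have hset : {zz | ¬ Φ t zz ∈ 𝒳} = Φ t ⁻¹' 𝒳ᶜ := rfl
      rw [hset, Measure.map_apply (hXmeasω t) ((hΦmeas t) hXmeas.compl)]
      have : X t ⁻¹' (Φ t ⁻¹' 𝒳ᶜ) = {ϖ | ¬ traj t ϖ ∈ 𝒳} := by
        ext ϖ
        simp only [Set.mem_preimage, Set.mem_compl_iff, Set.mem_setOf_eq, ← htrajΦ t ϖ]
      rw [this, ← ae_iff]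
      exact htraj𝒳 t
    have haeprod1 : ∀ᵐ p ∂(ν.prod d), Φ t p.1 ∈ 𝒳 := by
      rw [ae_iff]
      have hset : {p : (Fin t → (Fin q → ℝ)) × (Fin q → ℝ) | ¬ Φ t p.1 ∈ 𝒳}
          = (Φ t ⁻¹' 𝒳ᶜ) ×ˢ (Set.univ : Set (Fin q → ℝ)) := by
        ext p; simp [Set.mem_prod]
      rw [hset, Measure.prod_prod]
      have : ν (Φ t ⁻¹' 𝒳ᶜ) = 0 := by
        have := hΦν; rw [ae_iff] at this; exact this
      rw [this, zero_mul]
    have haeprod2 : ∀ᵐ p ∂(ν.prod d), p.2 ∈ measureSupport d := by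
      rw [ae_iff]
      have hset : {p : (Fin t → (Fin q → ℝ)) × (Fin q → ℝ) | ¬ p.2 ∈ measureSupport d}
          = (Set.univ : Set (Fin t → (Fin q → ℝ))) ×ˢ (measureSupport d)ᶜ := by
        ext p; simp [Set.mem_prod]
      rw [hset, Measure.prod_prod, measureSupport_compl_null d, mul_zero]
    have hg2int : Integrable g2 (ν.prod d) := by
      refine Integrable.mono' (integrable_const C) hg2meas.aestronglyMeasurable ?_
      filter_upwards [haeprod1, haeprod2] with p h1 h2
      by_cases hp : p ∈ (D t) ×ˢ (Set.univ : Set (Fin q → ℝ))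
      · simp only [hg2def, Set.indicator_of_mem hp]
        have hmem : f (Φ t p.1) (π (Φ t p.1)) p.2 ∈ 𝒳 := hinv _ h1 _ h2
        rw [Real.norm_eq_abs, abs_of_nonneg (hWnn _ hmem)]
        exact hWle _ hmem
      · simp only [hg2def, Set.indicator_of_notMem hp, norm_zero]
        exact hC0
    have hindep : IndepFun (X t) (ω t) μ := by
      have hdisj : Disjoint (Finset.range t) ({t} : Finset ℕ) := by
        simp only [Finset.disjoint_left, Finset.mem_range, Finset.mem_singleton]
        intro a ha
        omega
      have h := hωindep.indepFun_finset (Finset.range t) {t} hdisj hωmeas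
      have h1 : Measurable (fun v : (Finset.range t) → (Fin q → ℝ) =>
          fun i : Fin t => v ⟨(i : ℕ), Finset.mem_range.mpr i.isLt⟩) :=
        measurable_pi_lambda _ fun i => measurable_pi_apply _
      have h2 : Measurable (fun v : ({t} : Finset ℕ) → (Fin q → ℝ) =>
          v ⟨t, Finset.mem_singleton_self t⟩) := measurable_pi_apply _
      exact h.comp h1 h2
    have hg2map : AEStronglyMeasurable g2 ((μ.map (X t)).prod (μ.map (ω t))) :=
      hg2meas.aestronglyMeasurable
    have hg2int' : Integrable g2 ((μ.map (X t)).prod (μ.map (ω t))) := by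
      rw [hωlaw t]; exact hg2int
    have stepB : ∫ ϖ, (B t).indicator (fun ϖ => W (traj (t+1) ϖ)) ϖ ∂μ
        = ∫ zz, (D t).indicator
            (fun zz => ∫ w, W (f (Φ t zz) (π (Φ t zz)) w) ∂d) zz ∂ν := by
      have hptwise : ∀ ϖ, (B t).indicator (fun ϖ => W (traj (t+1) ϖ)) ϖ
          = g2 (X t ϖ, ω t ϖ) := by
        intro ϖ
        have htr : traj (t+1) ϖ = f (Φ t (X t ϖ)) (π (Φ t (X t ϖ))) (ω t ϖ) := by
          rw [htraj t ϖ, htrajΦ t ϖ]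
        by_cases hϖ : ϖ ∈ B t
        · have hp : (X t ϖ, ω t ϖ) ∈ (D t) ×ˢ (Set.univ : Set (Fin q → ℝ)) :=
            ⟨hϖ, Set.mem_univ _⟩
          simp only [Set.indicator_of_mem hϖ, hg2def, Set.indicator_of_mem hp]
          rw [htr]
        · have hp : (X t ϖ, ω t ϖ) ∉ (D t) ×ˢ (Set.univ : Set (Fin q → ℝ)) := by
            intro hc; exact hϖ hc.1
          simp only [Set.indicator_of_notMem hϖ, hg2def, Set.indicator_of_notMem hp]
      calc ∫ ϖ, (B t).indicator (fun ϖ => W (traj (t+1) ϖ)) ϖ ∂μ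
          = ∫ ϖ, g2 (X t ϖ, ω t ϖ) ∂μ := by
            exact integral_congr_ae (Filter.Eventually.of_forall hptwise)
        _ = ∫ zz, ∫ w, g2 (zz, w) ∂(μ.map (ω t)) ∂(μ.map (X t)) :=
            indepFun_integral_comp (hXmeasω t) (hωmeas t) hindep g2 hg2map hg2int'
        _ = ∫ zz, ∫ w, g2 (zz, w) ∂d ∂ν := by rw [hωlaw t, hνdef]
        _ = ∫ zz, (D t).indicator
              (fun zz => ∫ w, W (f (Φ t zz) (π (Φ t zz)) w) ∂d) zz ∂ν := by
            refine integral_congr_ae (Filter.Eventually.of_forall fun zz => ?_)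
            by_cases hz : zz ∈ D t
            · rw [Set.indicator_of_mem hz]
              refine integral_congr_ae (Filter.Eventually.of_forall fun w => ?_)
              have hp : (zz, w) ∈ (D t) ×ˢ (Set.univ : Set (Fin q → ℝ)) :=
                ⟨hz, Set.mem_univ _⟩
              simp only [hg2def, Set.indicator_of_mem hp]
            · rw [Set.indicator_of_notMem hz]
              have : ∀ w, g2 (zz, w) = 0 := by
                intro w
                have hp : (zz, w) ∉ (D t) ×ˢ (Set.univ : Set (Fin q → ℝ)) := by
                  intro hc; exact hz hc.1
                simp only [hg2def, Set.indicator_of_notMem hp]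
              simp only [this, integral_zero]
    -- Step C : apply the drift condition pointwise a.e.
    have hHmeas : StronglyMeasurable
        (fun zz : Fin t → (Fin q → ℝ) => ∫ w, W (f (Φ t zz) (π (Φ t zz)) w) ∂d) := by
      have : StronglyMeasurable (fun p : (Fin t → (Fin q → ℝ)) × (Fin q → ℝ) =>
          W (f (Φ t p.1) (π (Φ t p.1)) p.2)) :=
        (hWcont.measurable.comp (hf.comp
          (((hΦmeas t).comp measurable_fst).prodMk
            (((hπ.comp ((hΦmeas t).comp measurable_fst))).prodMk
              measurable_snd)))).stronglyMeasurable
      exact this.integral_prod_right'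
    have hDnotXt : ∀ zz ∈ D t, Φ t zz ∉ Xt := by
      intro zz hz
      have := Set.mem_iInter.mp hz t
      have h2 := Set.mem_iInter.mp this le_rfl
      have heq : (fun i : Fin t => zz (Fin.castLE le_rfl i)) = zz := by
        funext i; rfl
      simpa [heq] using h2
    have hintL : Integrable ((D t).indicator
        (fun zz => ∫ w, W (f (Φ t zz) (π (Φ t zz)) w) ∂d)) ν := by
      refine Integrable.mono' (integrable_const C)
        ((hHmeas.indicator (hDmeas t)).aestronglyMeasurable) ?_
      filter_upwards [hΦν] with zz h
      by_cases hz : zz ∈ D t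
      · rw [Set.indicator_of_mem hz]
        have hb : ‖∫ w, W (f (Φ t zz) (π (Φ t zz)) w) ∂d‖ ≤ C * (d Set.univ).toReal := by
          refine norm_integral_le_of_norm_le_const ?_
          filter_upwards [hdsupp] with w hw
          have hmem : f (Φ t zz) (π (Φ t zz)) w ∈ 𝒳 := hinv _ h _ hw
          rw [Real.norm_eq_abs, abs_of_nonneg (hWnn _ hmem)]
          exact hWle _ hmem
        simpa using hb
      · simp [Set.indicator_of_notMem hz, hC0]
    have hintR : Integrable ((D t).indicator (fun zz => W (Φ t zz) - ε)) ν := by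
      refine Integrable.mono' (integrable_const (C + ε))
        ((((hWcont.measurable.comp (hΦmeas t)).sub measurable_const).indicator
          (hDmeas t)).aestronglyMeasurable) ?_
      filter_upwards [hΦν] with zz h
      by_cases hz : zz ∈ D t
      · rw [Set.indicator_of_mem hz, Real.norm_eq_abs, abs_le]
        constructor
        · have := hWnn _ h; linarith
        · have := hWle _ h; linarith
      · rw [Set.indicator_of_notMem hz]
        simp only [norm_zero]
        linarith
    have stepC : ∫ zz, (D t).indicator
          (fun zz => ∫ w, W (f (Φ t zz) (π (Φ t zz)) w) ∂d) zz ∂ν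
        ≤ ∫ zz, (D t).indicator (fun zz => W (Φ t zz) - ε) zz ∂ν := by
      refine integral_mono_ae hintL hintR ?_
      filter_upwards [hΦν] with zz h
      by_cases hz : zz ∈ D t
      · rw [Set.indicator_of_mem hz, Set.indicator_of_mem hz]
        have hnot : Φ t zz ∉ Xt := hDnotXt zz hz
        have heqint : ∫ w, W (f (Φ t zz) (π (Φ t zz)) w) ∂d
            = ∫ w, V (f (Φ t zz) (π (Φ t zz)) w) ∂d := by
          refine integral_congr_ae ?_
          filter_upwards [hdsupp] with w hw
          exact hWeq _ (hinv _ h _ hw)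
        rw [heqint, hWeq _ h]
        exact hVdec _ ⟨h, hnot⟩
      · rw [Set.indicator_of_notMem hz, Set.indicator_of_notMem hz]
    -- Step D : map back to Ω.
    have stepD : ∫ zz, (D t).indicator (fun zz => W (Φ t zz) - ε) zz ∂ν
        = ∫ ϖ, (B t).indicator (fun ϖ => W (traj t ϖ) - ε) ϖ ∂μ := by
      rw [hνdef, integral_map (hXmeasω t).aemeasurable]
      · refine integral_congr_ae (Filter.Eventually.of_forall fun ϖ => ?_)
        beta_reduce
        by_cases hϖ : ϖ ∈ B t
        · rw [Set.indicator_of_mem (show X t ϖ ∈ D t from hϖ),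
            Set.indicator_of_mem hϖ, htrajΦ t ϖ]
        · rw [Set.indicator_of_notMem (show X t ϖ ∉ D t from hϖ),
            Set.indicator_of_notMem hϖ]
      · exact ((((hWcont.measurable.comp (hΦmeas t)).sub measurable_const).indicator
          (hDmeas t)).stronglyMeasurable).aestronglyMeasurable
    -- Step E : split the integral.
    have stepE : ∫ ϖ, (B t).indicator (fun ϖ => W (traj t ϖ) - ε) ϖ ∂μ
        = G t - ε * (μ (B t)).toReal := by
      have hsplit : ∀ ϖ, (B t).indicator (fun ϖ => W (traj t ϖ) - ε) ϖ
          = (B t).indicator (fun ϖ => W (traj t ϖ)) ϖ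
            - (B t).indicator (fun _ => ε) ϖ := by
        intro ϖ; by_cases h : ϖ ∈ B t <;> simp [h]
      calc ∫ ϖ, (B t).indicator (fun ϖ => W (traj t ϖ) - ε) ϖ ∂μ
          = ∫ ϖ, ((B t).indicator (fun ϖ => W (traj t ϖ)) ϖ
              - (B t).indicator (fun _ => ε) ϖ) ∂μ := by
            exact integral_congr_ae (Filter.Eventually.of_forall hsplit)
        _ = G t - ∫ ϖ, (B t).indicator (fun _ => ε) ϖ ∂μ := by
            rw [integral_sub (hint t (B t) (hBmeas t))
              ((integrable_const ε).indicator (hBmeas t))]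
        _ = G t - ε * (μ (B t)).toReal := by
            rw [integral_indicator_const ε (hBmeas t), smul_eq_mul, mul_comm, measureReal_def]
    calc G (t+1) ≤ ∫ ϖ, (B t).indicator (fun ϖ => W (traj (t+1) ϖ)) ϖ ∂μ := stepA
      _ = ∫ zz, (D t).indicator
            (fun zz => ∫ w, W (f (Φ t zz) (π (Φ t zz)) w) ∂d) zz ∂ν := stepB
      _ ≤ ∫ zz, (D t).indicator (fun zz => W (Φ t zz) - ε) zz ∂ν := stepC
      _ = ∫ ϖ, (B t).indicator (fun ϖ => W (traj t ϖ) - ε) ϖ ∂μ := stepD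
      _ = G t - ε * (μ (B t)).toReal := stepE
  -- Conclusion: the never-reach event is null.
  set N : Set Ω := ⋂ t, B t with hNdef
  set r : ℝ := (μ N).toReal with hrdef
  have hr0 : 0 ≤ r := ENNReal.toReal_nonneg
  have hrB : ∀ t, r ≤ (μ (B t)).toReal := fun t =>
    ENNReal.toReal_mono (measure_ne_top μ _) (measure_mono (Set.iInter_subset _ t))
  have hstep' : ∀ t, G (t+1) ≤ G t - ε * r := by
    intro t
    have h1 := hstep t
    have h2 : ε * r ≤ ε * (μ (B t)).toReal :=
      mul_le_mul_of_nonneg_left (hrB t) hε.le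
    linarith
  have hGbound : ∀ t : ℕ, G t ≤ G 0 - t * (ε * r) := by
    intro t
    induction t with
    | zero => simp
    | succ t ih =>
      have := hstep' t
      push_cast
      push_cast at ih
      linarith
  have hεr : ε * r ≤ 0 := by
    by_contra h
    push_neg at h
    obtain ⟨t, ht⟩ := exists_nat_gt (C / (ε * r))
    have h1 := hGbound t
    have h2 := hGnn t
    have h3 : (t : ℝ) * (ε * r) ≤ G 0 := by linarith
    have h4 : G 0 ≤ C := hG0
    have h5 : (t : ℝ) ≤ C / (ε * r) := by
      rw [le_div_iff₀ h]
      linarith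
    linarith
  have hrzero : r = 0 := le_antisymm (by nlinarith) hr0
  have hμN : μ N = 0 := by
    have := (ENNReal.toReal_eq_zero_iff (μ N)).mp hrzero
    rcases this with h | h
    · exact h
    · exact absurd h (measure_ne_top μ N)
  -- Finish.
  have hTmeas : MeasurableSet {ϖ | ∃ t : ℕ, traj t ϖ ∈ Xt} := by
    have : {ϖ | ∃ t : ℕ, traj t ϖ ∈ Xt} = ⋃ t, traj t ⁻¹' Xt := by
      ext ϖ; simp [Set.mem_iUnion, Set.mem_preimage]
    rw [this]
    exact MeasurableSet.iUnion fun t => (htrajmeas t) hXtmeas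
  have hcompl : {ϖ | ∃ t : ℕ, traj t ϖ ∈ Xt}ᶜ = N := by
    ext ϖ
    simp only [Set.mem_compl_iff, Set.mem_setOf_eq, not_exists, hNdef, Set.mem_iInter]
    constructor
    · intro h t
      rw [hBmem]
      exact fun s _ => h s
    · intro h t
      have := (hBmem t ϖ).mp (h t)
      exact this t le_rfl
  rw [← prob_compl_eq_zero_iff hTmeas, hcompl]
  exact hμN
end
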